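/- Let A be a hyperbolic surface with piecewise geodesic boundary, let γ be a geodesic arc contained in ∂A, and let E ⊂ γ be a measurable subset such that for each x ∈ E the perpendicular geodesic arc a_x of length ε emanating from x into A is defined, and the arcs {a_x : x ∈ E} are pairwise disjoint, embedded, and contained in the interior of A except for their starting points. Then length(E) · sinh(ε) ≤ Area(A). -/

import Mathlib

open MeasureTheory ENNReal Set

/-- The hyperbolic area of a region of the upper half-plane: `∫∫ dx dy / y²`. -/
noncomputable def hypArea (T : Set (ℝ × ℝ)) : ℝ≥0∞ :=
  ∫⁻ p in T, ENNReal.ofReal (1 / p.2 ^ 2)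

/-- The perpendicular geodesic arc of hyperbolic length `ε` emanating from the point
`(0, e^s)` of the imaginary axis into the side `x ≥ 0`: it lies on the semicircle of
radius `e^s` centred at the origin, up to the angle `arctan(sinh ε)` (the point at
angle `φ` is at hyperbolic distance `arsinh(tan φ)` from the axis). -/
def perpArc (s ε : ℝ) : Set (ℝ × ℝ) :=
  {q | ∃ φ ∈ Icc (0 : ℝ) (Real.arctan (Real.sinh ε)),
    q = (Real.exp s * Real.sin φ, Real.exp s * Real.cos φ)}

/-- auxiliary -/
noncomputable def Phi (p : ℝ × ℝ) : ℝ × ℝ :=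
  (Real.exp p.1 * Real.sin p.2, Real.exp p.1 * Real.cos p.2)

noncomputable def PhiDeriv (p : ℝ × ℝ) : ℝ × ℝ →L[ℝ] ℝ × ℝ :=
  LinearMap.toContinuousLinearMap <|
    Matrix.toLin (Module.Basis.finTwoProd ℝ) (Module.Basis.finTwoProd ℝ)
      !![Real.exp p.1 * Real.sin p.2, Real.exp p.1 * Real.cos p.2;
         Real.exp p.1 * Real.cos p.2, -(Real.exp p.1 * Real.sin p.2)]

theorem PhiDeriv_det (p : ℝ × ℝ) : (PhiDeriv p).det = -Real.exp (2 * p.1) := by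
  rw [PhiDeriv]
  rw [ContinuousLinearMap.det, LinearMap.coe_toContinuousLinearMap, LinearMap.det_toLin]
  rw [Matrix.det_fin_two_of]
  have h : Real.exp (2 * p.1) = Real.exp p.1 * Real.exp p.1 := by
    rw [← Real.exp_add]; ring_nf
  have h2 := Real.sin_sq_add_cos_sq p.2
  nlinarith [h, h2]

theorem hasFDerivAt_Phi (p : ℝ × ℝ) : HasFDerivAt Phi (PhiDeriv p) p := by
  have hexp : HasFDerivAt (fun q : ℝ × ℝ => Real.exp q.1)
      (Real.exp p.1 • ContinuousLinearMap.fst ℝ ℝ ℝ) p :=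
    (Real.hasDerivAt_exp p.1).comp_hasFDerivAt p (hasFDerivAt_fst)
  have hsin : HasFDerivAt (fun q : ℝ × ℝ => Real.sin q.2)
      (Real.cos p.2 • ContinuousLinearMap.snd ℝ ℝ ℝ) p :=
    (Real.hasDerivAt_sin p.2).comp_hasFDerivAt p (hasFDerivAt_snd)
  have hcos : HasFDerivAt (fun q : ℝ × ℝ => Real.cos q.2)
      ((-Real.sin p.2) • ContinuousLinearMap.snd ℝ ℝ ℝ) p :=
    (Real.hasDerivAt_cos p.2).comp_hasFDerivAt p (hasFDerivAt_snd)
  have h := (hexp.mul hsin).prodMk (hexp.mul hcos)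
  convert h using 1 <;> try rfl
  apply ContinuousLinearMap.ext
  rintro ⟨u, v⟩
  simp [PhiDeriv, Matrix.toLin_apply, Module.Basis.finTwoProd, Matrix.mulVec, Matrix.vecHead,
    Matrix.vecTail, Prod.ext_iff]
  constructor <;> ring


/-- if the perpendicular arcs of length `ε` over a measurable set `E` of
parameters of a boundary geodesic segment are pairwise disjoint and contained in the
hyperbolic surface `A`, then `length(E)·sinh(ε) ≤ Area(A)`. -/
theorem perpendicular_arcs_area_bound (L ε : ℝ) (hL : 0 ≤ L) (hε : 0 ≤ ε)
    (A : Set (ℝ × ℝ)) (hA : MeasurableSet A) (hA' : A ⊆ {p : ℝ × ℝ | 0 < p.2})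
    (E : Set ℝ) (hE : MeasurableSet E) (hEL : E ⊆ Icc 0 L)
    (harc : ∀ s ∈ E, perpArc s ε ⊆ A)
    (hdisj : ∀ s ∈ E, ∀ t ∈ E, s ≠ t → Disjoint (perpArc s ε) (perpArc t ε)) :
    volume E * ENNReal.ofReal (Real.sinh ε) ≤ hypArea A := by
  set α := Real.arctan (Real.sinh ε) with hα
  have hα0 : 0 ≤ α := by
    rw [hα, ← Real.arctan_zero]
    exact Real.arctan_strictMono.monotone (Real.sinh_nonneg_iff.mpr hε)
  have hαlt : α < Real.pi / 2 := Real.arctan_lt_pi_div_two _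
  have hcos : ∀ φ ∈ Icc (0:ℝ) α, 0 < Real.cos φ := fun φ hφ =>
    Real.cos_pos_of_mem_Ioo ⟨by linarith [Real.pi_div_two_pos, hφ.1], lt_of_le_of_lt hφ.2 hαlt⟩
  set S : Set (ℝ × ℝ) := E ×ˢ Icc 0 α with hS
  have hSm : MeasurableSet S := hE.prod measurableSet_Icc
  -- injectivity
  have hinj : InjOn Phi S := by
    rintro ⟨s, φ⟩ ⟨hs, hφ⟩ ⟨t, ψ⟩ ⟨ht, hψ⟩ heq
    have h1 : Real.exp s * Real.sin φ = Real.exp t * Real.sin ψ := congrArg Prod.fst heq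
    have h2 : Real.exp s * Real.cos φ = Real.exp t * Real.cos ψ := congrArg Prod.snd heq
    have hsq : (Real.exp s) ^ 2 = (Real.exp t) ^ 2 := by
      have a := Real.sin_sq_add_cos_sq φ
      have b := Real.sin_sq_add_cos_sq ψ
      linear_combination (Real.exp s * Real.sin φ + Real.exp t * Real.sin ψ) * h1 +
        (Real.exp s * Real.cos φ + Real.exp t * Real.cos ψ) * h2 +
        (Real.exp t) ^ 2 * b - (Real.exp s) ^ 2 * a
    have hst : Real.exp s = Real.exp t := by
      rw [← Real.sqrt_sq (Real.exp_pos s).le, hsq, Real.sqrt_sq (Real.exp_pos t).le]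
    have hs' : s = t := Real.exp_injective hst
    have hsinφ : Real.sin φ = Real.sin ψ := by
      have := h1; rw [hst] at this
      exact mul_left_cancel₀ (Real.exp_ne_zero t) this
    have hφψ : φ = ψ := by
      apply Real.injOn_sin ⟨by linarith [Real.pi_div_two_pos, hφ.1], le_trans hφ.2 hαlt.le⟩
        ⟨by linarith [Real.pi_div_two_pos, hψ.1], le_trans hψ.2 hαlt.le⟩ hsinφ
    simp [hs', hφψ]
  -- derivative within
  have hder : ∀ p ∈ S, HasFDerivWithinAt Phi (PhiDeriv p) S p := fun p _ =>
    (hasFDerivAt_Phi p).hasFDerivWithinAt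
  -- image inside A
  have himg : Phi '' S ⊆ A := by
    rintro q ⟨⟨s, φ⟩, ⟨hs, hφ⟩, rfl⟩
    exact harc s hs ⟨φ, hφ, rfl⟩
  -- change of variables
  have key := lintegral_image_eq_lintegral_abs_det_fderiv_mul volume hSm hder hinj
    (fun p => ENNReal.ofReal (1 / p.2 ^ 2))
  have hmono : (∫⁻ p in Phi '' S, ENNReal.ofReal (1 / p.2 ^ 2)) ≤ hypArea A := by
    unfold hypArea
    exact lintegral_mono_set himg
  rw [key] at hmono
  refine le_trans (le_of_eq ?_) hmono
  -- compute the RHS integral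
  have hcongr : ∫⁻ p in S, ENNReal.ofReal |(PhiDeriv p).det| *
      ENNReal.ofReal (1 / (Phi p).2 ^ 2)
      = ∫⁻ p in S, ENNReal.ofReal (1 / Real.cos p.2 ^ 2) := by
    apply setLIntegral_congr_fun hSm
    intro x hx; revert hx; revert x
    rintro ⟨s, φ⟩ ⟨hs, hφ⟩
    have hc := hcos φ hφ
    dsimp only
    rw [PhiDeriv_det, abs_neg, abs_of_pos (Real.exp_pos _)]
    rw [← ENNReal.ofReal_mul (Real.exp_pos _).le]
    congr 1
    have he : Real.exp (2 * s) = (Real.exp s) ^ 2 := by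
      rw [two_mul, Real.exp_add, sq]
    show Real.exp (2*s) * (1 / (Real.exp s * Real.cos φ) ^ 2) = 1 / Real.cos φ ^ 2
    rw [he]
    field_simp
  rw [hcongr]
  -- Tonelli
  have hprod : (volume : Measure (ℝ × ℝ)) = (volume : Measure ℝ).prod volume :=
    MeasureTheory.Measure.volume_eq_prod ℝ ℝ
  have hfin : ∫⁻ φ in Icc (0:ℝ) α, ENNReal.ofReal (1 / Real.cos φ ^ 2)
      = ENNReal.ofReal (Real.sinh ε) := by
    have hcont : ContinuousOn (fun φ : ℝ => 1 / Real.cos φ ^ 2) (Icc 0 α) := by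
      apply ContinuousOn.div continuousOn_const (Real.continuous_cos.continuousOn.pow 2)
      intro φ hφ
      exact pow_ne_zero 2 (hcos φ hφ).ne'
    have hint : IntegrableOn (fun φ : ℝ => 1 / Real.cos φ ^ 2) (Icc 0 α) :=
      hcont.integrableOn_compact isCompact_Icc
    rw [← ofReal_integral_eq_lintegral_ofReal hint (ae_of_all _ fun φ => by positivity)]
    congr 1
    rw [integral_Icc_eq_integral_Ioc, ← intervalIntegral.integral_of_le hα0]
    have : ∫ φ in (0:ℝ)..α, 1 / Real.cos φ ^ 2 = Real.tan α - Real.tan 0 := by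
      apply intervalIntegral.integral_eq_sub_of_hasDerivAt
      · intro x hx
        rw [uIcc_of_le hα0] at hx
        exact Real.hasDerivAt_tan (hcos x hx).ne'
      · apply ContinuousOn.intervalIntegrable
        rwa [uIcc_of_le hα0]
    rw [this, Real.tan_zero, sub_zero, hα, Real.tan_arctan]
  calc volume E * ENNReal.ofReal (Real.sinh ε)
      = ∫⁻ s in E, ENNReal.ofReal (Real.sinh ε) ∂volume := by
        rw [setLIntegral_const, mul_comm]
    _ = ∫⁻ s in E, ∫⁻ φ in Icc (0:ℝ) α, ENNReal.ofReal (1 / Real.cos φ ^ 2) ∂volume ∂volume := by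
        simp_rw [hfin]
    _ = ∫⁻ p in S, ENNReal.ofReal (1 / Real.cos p.2 ^ 2) := by
        rw [hS, hprod, ← Measure.prod_restrict]
        rw [lintegral_prod]
        exact (ENNReal.measurable_ofReal.comp
          ((measurable_const.div ((Real.measurable_cos.comp measurable_snd).pow_const 2)))).aemeasurable
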